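/- Let G be a compact Hausdorff group acting continuously and freely on a compact Hausdorff space X. If the covering dimension of X/G is at most d, then the Schwarz genus of X is at most d: any finite cover of X/G by trivializing open sets can be refined and regrouped into at most d+1 disjoint families of trivializing open sets, each of whose unions is trivializing. -/

import Mathlib

noncomputable section

/-- An open set `V ⊆ X/G` is *trivializing* for the quotient map `π : X → X/G` when there
is a continuous `G`-equivariant map `π⁻¹(V) → G` (equivalently, a `G`-equivariant
homeomorphism `π⁻¹(V) ≅ V × G` over `V`). -/
def Trivializing (G X : Type) [TopologicalSpace G] [Group G] [TopologicalSpace X]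
    [MulAction G X] (V : Set (Quotient (MulAction.orbitRel G X))) : Prop :=
  ∃ f : C({x : X // Quotient.mk (MulAction.orbitRel G X) x ∈ V}, G),
    ∀ (g : G) (x : X) (hx : Quotient.mk (MulAction.orbitRel G X) x ∈ V)
      (hgx : Quotient.mk (MulAction.orbitRel G X) (g • x) ∈ V),
      f ⟨g • x, hgx⟩ = g * f ⟨x, hx⟩

lemma Trivializing.mono {G X : Type} [TopologicalSpace G] [Group G] [TopologicalSpace X]
    [MulAction G X] {U V : Set (Quotient (MulAction.orbitRel G X))}
    (h : Trivializing G X U) (hVU : V ⊆ U) : Trivializing G X V := by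
  obtain ⟨f, hf⟩ := h
  refine ⟨⟨fun x => f ⟨x.1, hVU x.2⟩, ?_⟩, ?_⟩
  · exact f.continuous.comp (Continuous.subtype_mk continuous_subtype_val _)
  · intro g x hx hgx
    exact hf g x (hVU hx) (hVU hgx)

lemma quot_smul_eq {G X : Type} [TopologicalSpace G] [Group G] [TopologicalSpace X]
    [MulAction G X] (g : G) (x : X) :
    Quotient.mk (MulAction.orbitRel G X) (g • x) = Quotient.mk (MulAction.orbitRel G X) x :=
  Quotient.sound (MulAction.mem_orbit x g)

lemma trivializing_disjoint_iUnion {G X : Type} [TopologicalSpace G] [Group G]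
    [TopologicalSpace X] [MulAction G X] {ι : Type} (V : ι → Set (Quotient (MulAction.orbitRel G X)))
    (hop : ∀ i, IsOpen (V i)) (hdisj : ∀ i j, i ≠ j → V i ∩ V j = ∅)
    (htr : ∀ i, Trivializing G X (V i)) : Trivializing G X (⋃ i, V i) := by
  classical
  set π : X → Quotient (MulAction.orbitRel G X) := Quotient.mk (MulAction.orbitRel G X) with hπ
  choose f hf using htr
  have hπc : Continuous π := continuous_quot_mk
  set S := {x : X // π x ∈ ⋃ i, V i} with hS
  have idx : ∀ x : S, ∃ i, π x.1 ∈ V i := fun x => Set.mem_iUnion.mp x.2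
  set F : S → G := fun x => f (idx x).choose ⟨x.1, (idx x).choose_spec⟩ with hF
  have key : ∀ (x : X) (hSx : π x ∈ ⋃ i, V i) (i : ι) (hi : π x ∈ V i),
      F ⟨x, hSx⟩ = f i ⟨x, hi⟩ := by
    intro x hSx i hi
    have hi' := (idx ⟨x, hSx⟩).choose_spec
    by_cases h : (idx ⟨x, hSx⟩).choose = i
    · subst h; rfl
    · exact absurd (Set.eq_empty_iff_forall_notMem.mp (hdisj _ i h) (π x) ⟨hi', hi⟩) id
  have hFc : Continuous F := by
    rw [continuous_iff_continuousAt]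
    intro x
    obtain ⟨i, hi⟩ := idx x
    set O : Set S := (fun y : S => π y.1) ⁻¹' V i with hO
    have hOopen : IsOpen O := (hop i).preimage (hπc.comp continuous_subtype_val)
    refine ContinuousOn.continuousAt ?_ (hOopen.mem_nhds hi)
    rw [continuousOn_iff_continuous_restrict]
    have : O.domRestrict F = fun y => f i ⟨y.1.1, y.2⟩ := by
      funext y
      exact key y.1.1 y.1.2 i y.2
    rw [this]
    exact (f i).continuous.comp
      (Continuous.subtype_mk (continuous_subtype_val.comp continuous_subtype_val) _)
  refine ⟨⟨F, hFc⟩, ?_⟩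
  intro g x hx hgx
  obtain ⟨i, hi⟩ := Set.mem_iUnion.mp hx
  have hgi : π (g • x) ∈ V i := by
    show Quotient.mk (MulAction.orbitRel G X) (g • x) ∈ V i
    rw [quot_smul_eq]; exact hi
  show F ⟨g • x, hgx⟩ = g * F ⟨x, hx⟩
  rw [key _ hgx i hgi, key _ hx i hi]
  exact hf i g x hi hgi

/-- Let `G` be a compact Hausdorff group acting continuously and freely
on a compact Hausdorff space `X`.  If the covering dimension of `X/G` is at most `d`
(every finite open cover refines to a finite open cover splitting into `d+1` families of
pairwise disjoint sets), then the Schwarz genus of `X` is at most `d`:  given any finite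
cover of `X/G` by trivializing open sets, `X/G` can be covered by at most `d+1`
trivializing open sets. -/
theorem genus_le_covering_dimension
    (G : Type) [TopologicalSpace G] [Group G] [IsTopologicalGroup G] [CompactSpace G]
    [T2Space G]
    (X : Type) [TopologicalSpace X] [CompactSpace X] [T2Space X]
    [MulAction G X] [ContinuousSMul G X]
    (hfree : ∀ (g : G) (x : X), g • x = x → g = 1)
    (d : ℕ)
    (hdim : ∀ (m : ℕ) (U : Fin m → Set (Quotient (MulAction.orbitRel G X))),
      (∀ i, IsOpen (U i)) → (⋃ i, U i) = Set.univ →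
      ∃ (m' : ℕ) (V : Fin m' → Set (Quotient (MulAction.orbitRel G X)))
        (c : Fin m' → Fin (d + 1)),
        (∀ j, IsOpen (V j)) ∧ (⋃ j, V j) = Set.univ ∧
        (∀ j, ∃ i, V j ⊆ U i) ∧
        (∀ j k, j ≠ k → c j = c k → V j ∩ V k = ∅))
    (htriv : ∃ (m : ℕ) (U : Fin m → Set (Quotient (MulAction.orbitRel G X))),
      (∀ i, IsOpen (U i)) ∧ (⋃ i, U i) = Set.univ ∧ ∀ i, Trivializing G X (U i)) :
    ∃ W : Fin (d + 1) → Set (Quotient (MulAction.orbitRel G X)),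
      (∀ i, IsOpen (W i)) ∧ (⋃ i, W i) = Set.univ ∧ ∀ i, Trivializing G X (W i) := by
  obtain ⟨m, U, hUopen, hUcover, hUtriv⟩ := htriv
  obtain ⟨m', V, c, hVopen, hVcover, hVref, hVdisj⟩ := hdim m U hUopen hUcover
  have hVtriv : ∀ j, Trivializing G X (V j) := fun j => by
    obtain ⟨i, hij⟩ := hVref j
    exact (hUtriv i).mono hij
  refine ⟨fun i => ⋃ j : {j : Fin m' // c j = i}, V j.1, ?_, ?_, ?_⟩
  · exact fun i => isOpen_iUnion fun j => hVopen j.1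
  · rw [Set.eq_univ_iff_forall]
    intro q
    have hq : q ∈ ⋃ j, V j := hVcover ▸ Set.mem_univ q
    obtain ⟨j, hj⟩ := Set.mem_iUnion.mp hq
    exact Set.mem_iUnion.mpr ⟨c j, Set.mem_iUnion.mpr ⟨⟨j, rfl⟩, hj⟩⟩
  · intro i
    refine trivializing_disjoint_iUnion _ (fun j => hVopen j.1) ?_ (fun j => hVtriv j.1)
    intro j k hjk
    exact hVdisj j.1 k.1 (fun h => hjk (Subtype.ext h)) (j.2.trans k.2.symm)
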